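/- Fix n ≥ 3 and a basis β = (b_1, …, b_{n-1}) of an (n−1)-dimensional subspace together with a prescribed value forcing b_0 = b_1 + ⋯ + b_{n-1}; then the number of choices, up to the automorphism group GL_n(𝔽_2) acting on characteristic data, of pairs (b_n, b_{n+1}) with b_n, b_{n+1} ∉ span{b_1,…,b_{n-1}}, counted modulo GL_n(𝔽_2), is 2^{n-1}. Consequently, the total number of D-J equivalence classes of ℤ/2-characteristic functions on the prism Δ^{n-1} × I is 1 + 2^{n-1}. -/

import Mathlib

/-- A `ℤ/2`-characteristic function on the prism `Δ^{n-1} × I`: the facets are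
`F_0,…,F_{n-1}` (side facets), `F_n` (bottom) and `F_{n+1}` (top), indexed by `Fin (n+2)`.
At each vertex `v_k` (resp. `w_{k+1}`), `0 ≤ k ≤ n-1`, the `n` facets containing it are
`{F_j : j < n, j ≠ k} ∪ {F_n}` (resp. `∪ {F_{n+1}}`), and their characteristic vectors must
form a basis of `(ℤ/2)ⁿ`. -/
def prismCharFn (n : ℕ) (l : Fin (n + 2) → (Fin n → ZMod 2)) : Prop :=
  ∀ k : Fin n,
    (LinearIndependent (ZMod 2)
        (fun j : {j : Fin (n + 2) // ((j : ℕ) < n ∧ (j : ℕ) ≠ (k : ℕ)) ∨ (j : ℕ) = n} =>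
          l j.1) ∧
      Submodule.span (ZMod 2)
        (l '' {j | ((j : ℕ) < n ∧ (j : ℕ) ≠ (k : ℕ)) ∨ (j : ℕ) = n}) = ⊤) ∧
    (LinearIndependent (ZMod 2)
        (fun j : {j : Fin (n + 2) // ((j : ℕ) < n ∧ (j : ℕ) ≠ (k : ℕ)) ∨ (j : ℕ) = n + 1} =>
          l j.1) ∧
      Submodule.span (ZMod 2)
        (l '' {j | ((j : ℕ) < n ∧ (j : ℕ) ≠ (k : ℕ)) ∨ (j : ℕ) = n + 1}) = ⊤)

/-- Davis–Januszkiewicz equivalence of characteristic data: `l₂ = θ ∘ l₁` for some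
automorphism `θ` of `(ℤ/2)ⁿ`. -/
def djEquiv (n : ℕ) (l1 l2 : Fin (n + 2) → (Fin n → ZMod 2)) : Prop :=
  ∃ θ : (Fin n → ZMod 2) ≃ₗ[ZMod 2] (Fin n → ZMod 2), l2 = fun j => θ (l1 j)

namespace Stmt5Aux
open Submodule

variable {n : ℕ}

lemma pi_eq_sum_single (x : Fin n → ZMod 2) :
    x = ∑ i, x i • Pi.single i (1 : ZMod 2) := by
  ext j
  simp [Pi.single_apply]

lemma span_eq_top {S : Submodule (ZMod 2) (Fin n → ZMod 2)}
    (h : ∀ i : Fin n, Pi.single i (1 : ZMod 2) ∈ S) : S = ⊤ := by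
  rw [eq_top_iff]
  intro x _
  rw [pi_eq_sum_single x]
  exact Submodule.sum_mem _ fun i _ => Submodule.smul_mem _ _ (h i)

lemma single_mem {S : Submodule (ZMod 2) (Fin n → ZMod 2)} {a : Fin n → ZMod 2}
    (ha : a ∈ S) {i0 : Fin n} (h1 : a i0 = 1)
    (h : ∀ i, i ≠ i0 → a i = 0 ∨ Pi.single i (1 : ZMod 2) ∈ S) :
    Pi.single i0 (1 : ZMod 2) ∈ S := by
  have key : Pi.single i0 (1 : ZMod 2)
      = a - ∑ i ∈ Finset.univ.erase i0, a i • Pi.single i (1 : ZMod 2) := by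
    ext j
    rw [Pi.sub_apply, Finset.sum_apply]
    simp only [Pi.smul_apply, Pi.single_apply, smul_eq_mul, mul_ite, mul_one, mul_zero]
    by_cases hj : j = i0
    · subst hj
      rw [Finset.sum_ite_eq (Finset.univ.erase j) j a]
      simp [h1]
    · rw [Finset.sum_ite_eq (Finset.univ.erase i0) j a]
      simp [hj, Ne.symm hj]
  rw [key]
  refine Submodule.sub_mem _ ha (Submodule.sum_mem _ fun i hi => ?_)
  rcases h i (Finset.ne_of_mem_erase hi) with h0 | hmem
  · simp [h0]
  · exact Submodule.smul_mem _ _ hmem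

lemma theta_eq_id (θ : (Fin n → ZMod 2) ≃ₗ[ZMod 2] (Fin n → ZMod 2))
    (h : ∀ i, θ (Pi.single i (1 : ZMod 2)) = Pi.single i 1) (x : Fin n → ZMod 2) :
    θ x = x := by
  nth_rewrite 1 [pi_eq_sum_single x]
  rw [map_sum]
  simp_rw [map_smul, h]
  exact (pi_eq_sum_single x).symm

lemma span_contra {s : Set (Fin (n+2))} {l : Fin (n+2) → (Fin n → ZMod 2)}
    (hspan : Submodule.span (ZMod 2) (l '' s) = ⊤)
    (φ : (Fin n → ZMod 2) →ₗ[ZMod 2] ZMod 2)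
    (h0 : ∀ j ∈ s, φ (l j) = 0) {x : Fin n → ZMod 2} (hx : φ x ≠ 0) : False := by
  have : Submodule.span (ZMod 2) (l '' s) ≤ LinearMap.ker φ := by
    rw [Submodule.span_le]
    rintro y ⟨j, hj, rfl⟩
    exact h0 j hj
  exact hx (this (hspan ▸ Submodule.mem_top))


/-- The canonical characteristic data with `b_j = e_{j-1}` for `1 ≤ j ≤ n`,
`b_0 = a`, `b_{n+1} = v`. -/
def canon (n : ℕ) (a v : Fin n → ZMod 2) : Fin (n + 2) → (Fin n → ZMod 2) :=
  fun j => if (j : ℕ) = 0 then a else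
    if h : (j : ℕ) - 1 < n then Pi.single ⟨(j : ℕ) - 1, h⟩ 1 else v

lemma canon_zero (a v : Fin n → ZMod 2) {j : Fin (n + 2)} (hj : (j : ℕ) = 0) :
    canon n a v j = a := by simp [canon, hj]

lemma canon_side (a v : Fin n → ZMod 2) {j : Fin (n + 2)} (h1 : 1 ≤ (j : ℕ))
    (h2 : (j : ℕ) ≤ n) : canon n a v j = Pi.single ⟨(j : ℕ) - 1, by omega⟩ 1 := by
  simp only [canon]
  rw [if_neg (by omega), dif_pos (by omega)]

lemma canon_topv (a v : Fin n → ZMod 2) {j : Fin (n + 2)} (hj : (j : ℕ) = n + 1) :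
    canon n a v j = v := by
  simp only [canon]
  rw [if_neg (by omega), dif_neg (by omega)]

/-- The index bijection of a vertex: `{j : j < n, j ≠ k} ∪ {t} ≃ Fin n`, where `t ∈ {n, n+1}`. -/
def vertexEquiv (k : Fin n) (t : ℕ) (ht1 : n ≤ t) (ht2 : t < n + 2) :
    {j : Fin (n + 2) // ((j : ℕ) < n ∧ (j : ℕ) ≠ (k : ℕ)) ∨ (j : ℕ) = t} ≃ Fin n where
  toFun j := if h : (j.1 : ℕ) = t then k else
    ⟨(j.1 : ℕ), by rcases j.2 with ⟨h1, _⟩ | h1; exacts [h1, absurd h1 h]⟩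
  invFun i := if h : i = k then ⟨⟨t, ht2⟩, Or.inr rfl⟩ else
    ⟨⟨(i : ℕ), by omega⟩, Or.inl ⟨i.2, fun hh => h (Fin.ext hh)⟩⟩
  left_inv := by
    rintro ⟨j, hj⟩
    dsimp only
    split_ifs with h h2 h2
    · exact Subtype.ext (Fin.ext h.symm)
    · exact absurd rfl h2
    · exact absurd (congrArg Fin.val h2)
        (by rcases hj with ⟨_, h3⟩ | h1; exacts [h3, absurd h1 h])
    · rfl
  right_inv := by
    intro i
    dsimp only
    split_ifs with h h2 h2
    · exact h.symm
    · exact absurd rfl h2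
    · have hi := i.2; simp only [] at h2; omega
    · rfl

lemma card_vertex (k : Fin n) (t : ℕ) (ht1 : n ≤ t) (ht2 : t < n + 2) :
    Fintype.card {j : Fin (n + 2) // ((j : ℕ) < n ∧ (j : ℕ) ≠ (k : ℕ)) ∨ (j : ℕ) = t} = n := by
  rw [Fintype.card_congr (vertexEquiv k t ht1 ht2), Fintype.card_fin]

lemma li_of_span {k : Fin n} {t : ℕ} (ht1 : n ≤ t) (ht2 : t < n + 2)
    {l : Fin (n + 2) → (Fin n → ZMod 2)}
    (hspan : Submodule.span (ZMod 2)
      (l '' {j | ((j : ℕ) < n ∧ (j : ℕ) ≠ (k : ℕ)) ∨ (j : ℕ) = t}) = ⊤) :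
    LinearIndependent (ZMod 2)
      (fun j : {j : Fin (n + 2) // ((j : ℕ) < n ∧ (j : ℕ) ≠ (k : ℕ)) ∨ (j : ℕ) = t} =>
        l j.1) := by
  apply linearIndependent_of_top_le_span_of_card_eq_finrank
  · have hr : Set.range
        (fun j : {j : Fin (n + 2) // ((j : ℕ) < n ∧ (j : ℕ) ≠ (k : ℕ)) ∨ (j : ℕ) = t} => l j.1)
        = l '' {j | ((j : ℕ) < n ∧ (j : ℕ) ≠ (k : ℕ)) ∨ (j : ℕ) = t} := by
      ext y
      constructor
      · rintro ⟨⟨j, hj⟩, rfl⟩; exact ⟨j, hj, rfl⟩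
      · rintro ⟨j, hj, rfl⟩; exact ⟨⟨j, hj⟩, rfl⟩
    rw [hr]
    exact le_of_eq hspan.symm
  · rw [card_vertex k t ht1 ht2, Module.finrank_fintype_fun_eq_card, Fintype.card_fin]


section Span

variable {a v : Fin n → ZMod 2}

lemma side_mem_span {k : Fin n} {t : ℕ}
    {i : Fin n} (hi : (i : ℕ) < n - 1) (hik : (i : ℕ) + 1 ≠ (k : ℕ)) :
    Pi.single i (1 : ZMod 2) ∈ Submodule.span (ZMod 2)
      (canon n a v '' {j | ((j : ℕ) < n ∧ (j : ℕ) ≠ (k : ℕ)) ∨ (j : ℕ) = t}) := by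
  apply Submodule.subset_span
  have hin : (i : ℕ) < n := i.2
  refine ⟨⟨(i : ℕ) + 1, by omega⟩, Or.inl ⟨by simpa using (by omega), by simpa using hik⟩, ?_⟩
  rw [canon_side a v (by simp) (by simp)]
  congr 1

lemma a_mem_span {k : Fin n} {t : ℕ} (hn : 0 < n) (hk : (k : ℕ) ≠ 0) :
    a ∈ Submodule.span (ZMod 2)
      (canon n a v '' {j | ((j : ℕ) < n ∧ (j : ℕ) ≠ (k : ℕ)) ∨ (j : ℕ) = t}) :=
  Submodule.subset_span ⟨0, Or.inl ⟨by simpa using hn, by simpa using (Ne.symm hk)⟩,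
    canon_zero a v (by simp)⟩

lemma canon_span_bot (hn : 3 ≤ n)
    (h1 : ∀ i : Fin n, (i : ℕ) < n - 1 → a i = 1) (k : Fin n) :
    Submodule.span (ZMod 2)
      (canon n a v '' {j | ((j : ℕ) < n ∧ (j : ℕ) ≠ (k : ℕ)) ∨ (j : ℕ) = n}) = ⊤ := by
  apply span_eq_top
  have hlast : Pi.single (⟨n - 1, by omega⟩ : Fin n) (1 : ZMod 2) ∈ Submodule.span (ZMod 2)
      (canon n a v '' {j | ((j : ℕ) < n ∧ (j : ℕ) ≠ (k : ℕ)) ∨ (j : ℕ) = n}) := by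
    apply Submodule.subset_span
    refine ⟨⟨n, by omega⟩, Or.inr (by simp), ?_⟩
    rw [canon_side a v (by simp; omega) (by simp)]
  intro i
  by_cases hik : (i : ℕ) + 1 = (k : ℕ)
  · have haS := a_mem_span (a := a) (v := v) (k := k) (t := n) (by omega) (by omega)
    have hi : (i : ℕ) < n - 1 := by have := k.2; omega
    refine single_mem haS (h1 i hi) fun i' hi' => ?_
    by_cases h' : (i' : ℕ) < n - 1
    · exact Or.inr (side_mem_span h' (by have := Fin.val_ne_of_ne hi'; omega))
    · have he : i' = ⟨n - 1, by omega⟩ := Fin.ext (by have := i'.2; simp; omega)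
      exact Or.inr (by rw [he]; exact hlast)
  · by_cases hi : (i : ℕ) < n - 1
    · exact side_mem_span hi hik
    · have he : i = ⟨n - 1, by omega⟩ := Fin.ext (by have := i.2; simp; omega)
      rw [he]; exact hlast

lemma canon_span_top (hn : 3 ≤ n)
    (h1 : ∀ i : Fin n, (i : ℕ) < n - 1 → a i = 1)
    (h2 : v ⟨n - 1, by omega⟩ = 1)
    (h3 : a ⟨n - 1, by omega⟩ = 0 ∨ ∀ i : Fin n, (i : ℕ) < n - 1 → v i = 0) (k : Fin n) :
    Submodule.span (ZMod 2)
      (canon n a v '' {j | ((j : ℕ) < n ∧ (j : ℕ) ≠ (k : ℕ)) ∨ (j : ℕ) = n + 1}) = ⊤ := by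
  apply span_eq_top
  have hv : v ∈ Submodule.span (ZMod 2)
      (canon n a v '' {j | ((j : ℕ) < n ∧ (j : ℕ) ≠ (k : ℕ)) ∨ (j : ℕ) = n + 1}) := by
    apply Submodule.subset_span
    exact ⟨⟨n + 1, by omega⟩, Or.inr (by simp), canon_topv a v (by simp)⟩
  rcases h3 with hA | hV
  · have hsingles : ∀ i : Fin n, (i : ℕ) < n - 1 → Pi.single i (1 : ZMod 2) ∈
        Submodule.span (ZMod 2)
          (canon n a v '' {j | ((j : ℕ) < n ∧ (j : ℕ) ≠ (k : ℕ)) ∨ (j : ℕ) = n + 1}) := by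
      intro i hi
      by_cases hik : (i : ℕ) + 1 = (k : ℕ)
      · have haS := a_mem_span (a := a) (v := v) (k := k) (t := n + 1) (by omega) (by omega)
        refine single_mem haS (h1 i hi) fun i' hi' => ?_
        by_cases h' : (i' : ℕ) < n - 1
        · exact Or.inr (side_mem_span h' (by have := Fin.val_ne_of_ne hi'; omega))
        · have he : i' = ⟨n - 1, by omega⟩ := Fin.ext (by have := i'.2; simp; omega)
          exact Or.inl (by rw [he]; exact hA)
      · exact side_mem_span hi hik
    intro i
    by_cases hi : (i : ℕ) < n - 1
    · exact hsingles i hi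
    · have he : i = ⟨n - 1, by omega⟩ := Fin.ext (by have := i.2; simp; omega)
      rw [he]
      refine single_mem hv h2 fun i' hi' => ?_
      have h' : (i' : ℕ) < n - 1 := by
        have := Fin.val_ne_of_ne hi'; have := i'.2; simp at this ⊢; omega
      exact Or.inr (hsingles i' h')
  · have hveq : v = Pi.single (⟨n - 1, by omega⟩ : Fin n) (1 : ZMod 2) := by
      funext i
      by_cases hi : (i : ℕ) < n - 1
      · rw [hV i hi, Pi.single_apply, if_neg (by intro h; rw [h] at hi; simp at hi)]
      · have he : i = ⟨n - 1, by omega⟩ := Fin.ext (by have := i.2; simp; omega)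
        rw [he, h2]
        simp
    have hlast : Pi.single (⟨n - 1, by omega⟩ : Fin n) (1 : ZMod 2) ∈
        Submodule.span (ZMod 2)
          (canon n a v '' {j | ((j : ℕ) < n ∧ (j : ℕ) ≠ (k : ℕ)) ∨ (j : ℕ) = n + 1}) := by
      rw [← hveq]; exact hv
    intro i
    by_cases hik : (i : ℕ) + 1 = (k : ℕ)
    · have haS := a_mem_span (a := a) (v := v) (k := k) (t := n + 1) (by omega) (by omega)
      have hi : (i : ℕ) < n - 1 := by have := k.2; omega
      refine single_mem haS (h1 i hi) fun i' hi' => ?_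
      by_cases h' : (i' : ℕ) < n - 1
      · exact Or.inr (side_mem_span h' (by have := Fin.val_ne_of_ne hi'; omega))
      · have he : i' = ⟨n - 1, by omega⟩ := Fin.ext (by have := i'.2; simp; omega)
        exact Or.inr (by rw [he]; exact hlast)
    · by_cases hi : (i : ℕ) < n - 1
      · exact side_mem_span hi hik
      · have he : i = ⟨n - 1, by omega⟩ := Fin.ext (by have := i.2; simp; omega)
        rw [he]; exact hlast

lemma canon_charFn (hn : 3 ≤ n)
    (h1 : ∀ i : Fin n, (i : ℕ) < n - 1 → a i = 1)
    (h2 : v ⟨n - 1, by omega⟩ = 1)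
    (h3 : a ⟨n - 1, by omega⟩ = 0 ∨ ∀ i : Fin n, (i : ℕ) < n - 1 → v i = 0) :
    prismCharFn n (canon n a v) := by
  intro k
  have hb := canon_span_bot (a := a) (v := v) hn h1 k
  have ht := canon_span_top (a := a) (v := v) hn h1 h2 h3 k
  exact ⟨⟨li_of_span le_rfl (by omega) hb, hb⟩, ⟨li_of_span (by omega) (by omega) ht, ht⟩⟩


lemma charFn_map {l : Fin (n + 2) → (Fin n → ZMod 2)}
    (θ : (Fin n → ZMod 2) ≃ₗ[ZMod 2] (Fin n → ZMod 2))
    (hl : prismCharFn n l) : prismCharFn n (fun j => θ (l j)) := by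
  intro k
  obtain ⟨⟨li1, sp1⟩, li2, sp2⟩ := hl k
  have hsp : ∀ s : Set (Fin (n + 2)), Submodule.span (ZMod 2) (l '' s) = ⊤ →
      Submodule.span (ZMod 2) ((fun j => θ (l j)) '' s) = ⊤ := by
    intro s hs
    have him : (fun j => θ (l j)) '' s = θ '' (l '' s) := by rw [Set.image_image]
    rw [him, ← LinearEquiv.coe_coe, ← Submodule.map_span, hs]
    simp [Submodule.map_top, LinearEquiv.range]
  refine ⟨⟨?_, hsp _ sp1⟩, ?_, hsp _ sp2⟩
  · exact li1.map' θ.toLinearMap θ.ker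
  · exact li2.map' θ.toLinearMap θ.ker

/-- The index bijection at the bottom vertex `v_0`. -/
def e0 (k : Fin n) (hk : (k : ℕ) = 0) :
    {j : Fin (n + 2) // ((j : ℕ) < n ∧ (j : ℕ) ≠ (k : ℕ)) ∨ (j : ℕ) = n} ≃ Fin n where
  toFun j := ⟨(j.1 : ℕ) - 1, by rcases j.2 with ⟨ha, hb⟩ | ha <;> omega⟩
  invFun i := ⟨⟨(i : ℕ) + 1, by have := i.2; omega⟩, by have := i.2; simp [hk]; omega⟩
  left_inv := by
    rintro ⟨j, hj⟩
    have hk1 : 1 ≤ (j : ℕ) := by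
      rcases hj with ⟨ha, hb⟩ | ha
      · rw [hk] at hb; omega
      · have := k.2; omega
    exact Subtype.ext (Fin.ext (by simp; omega))
  right_inv := fun i => Fin.ext (by simp)

lemma e0_apply (k : Fin n) (hk : (k : ℕ) = 0)
    (jj : {j : Fin (n + 2) // ((j : ℕ) < n ∧ (j : ℕ) ≠ (k : ℕ)) ∨ (j : ℕ) = n}) :
    e0 k hk jj = ⟨(jj.1 : ℕ) - 1, by rcases jj.2 with ⟨ha, hb⟩ | ha <;> omega⟩ := rfl

lemma normalize (hn : 3 ≤ n) {l : Fin (n + 2) → (Fin n → ZMod 2)}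
    (hl : prismCharFn n l) :
    ∃ θ : (Fin n → ZMod 2) ≃ₗ[ZMod 2] (Fin n → ZMod 2),
      (fun j => θ (l j)) = canon n (θ (l 0)) (θ (l ⟨n + 1, by omega⟩)) := by
  obtain ⟨⟨li, sp⟩, -⟩ := hl ⟨0, by omega⟩
  have hsp : ⊤ ≤ Submodule.span (ZMod 2) (Set.range
      (fun j : {j : Fin (n + 2) //
          ((j : ℕ) < n ∧ (j : ℕ) ≠ ((⟨0, by omega⟩ : Fin n) : ℕ)) ∨ (j : ℕ) = n} => l j.1)) := by
    have hr : Set.range (fun j : {j : Fin (n + 2) //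
          ((j : ℕ) < n ∧ (j : ℕ) ≠ ((⟨0, by omega⟩ : Fin n) : ℕ)) ∨ (j : ℕ) = n} => l j.1)
        = l '' {j | ((j : ℕ) < n ∧ (j : ℕ) ≠ ((⟨0, by omega⟩ : Fin n) : ℕ)) ∨ (j : ℕ) = n} := by
      ext y
      constructor
      · rintro ⟨⟨j, hj⟩, rfl⟩; exact ⟨j, hj, rfl⟩
      · rintro ⟨j, hj, rfl⟩; exact ⟨⟨j, hj⟩, rfl⟩
    rw [hr, sp]
  let B := Module.Basis.mk li hsp
  refine ⟨B.equiv (Pi.basisFun (ZMod 2) (Fin n)) (e0 ⟨0, by omega⟩ rfl), funext fun j => ?_⟩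
  by_cases h0 : (j : ℕ) = 0
  · rw [canon_zero _ _ h0]
    have : j = 0 := Fin.ext (by simpa using h0)
    rw [this]
  · by_cases htp : (j : ℕ) = n + 1
    · rw [canon_topv _ _ htp]
      have : j = ⟨n + 1, by omega⟩ := Fin.ext htp
      rw [this]
    · have h1 : 1 ≤ (j : ℕ) := by omega
      have h2 : (j : ℕ) ≤ n := by have := j.2; omega
      rw [canon_side _ _ h1 h2]
      have hjmem : ((j : ℕ) < n ∧ (j : ℕ) ≠ ((⟨0, by omega⟩ : Fin n) : ℕ)) ∨ (j : ℕ) = n := by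
        show ((j : ℕ) < n ∧ (j : ℕ) ≠ 0) ∨ (j : ℕ) = n; omega
      have hlj : l j = B ⟨j, hjmem⟩ := (Module.Basis.mk_apply li hsp ⟨j, hjmem⟩).symm
      show _ = _
      rw [hlj, Module.Basis.equiv_apply]
      rw [e0_apply, Pi.basisFun_apply]


lemma zmod2_cases (x : ZMod 2) : x = 0 ∨ x = 1 := by revert x; decide

lemma P_of_charFn (hn : 3 ≤ n) {a v : Fin n → ZMod 2}
    (h : prismCharFn n (canon n a v)) :
    (∀ i : Fin n, (i : ℕ) < n - 1 → a i = 1) ∧ v ⟨n - 1, by omega⟩ = 1 ∧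
      (a ⟨n - 1, by omega⟩ = 0 ∨ ∀ i : Fin n, (i : ℕ) < n - 1 → v i = 0) := by
  have h1 : ∀ i : Fin n, (i : ℕ) < n - 1 → a i = 1 := by
    intro i hi
    rcases zmod2_cases (a i) with h0 | h0
    swap; · exact h0
    exfalso
    obtain ⟨⟨-, sp⟩, -⟩ := h ⟨(i : ℕ) + 1, by omega⟩
    refine span_contra sp (LinearMap.proj i) ?_ (x := Pi.single i 1) (by simp)
    intro j hj
    simp only [Set.mem_setOf_eq] at hj
    rcases hj with ⟨hjn, hjk⟩ | hjn
    · by_cases hj0 : (j : ℕ) = 0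
      · rw [canon_zero _ _ hj0]; exact h0
      · rw [canon_side _ _ (by omega) (by omega)]
        rw [LinearMap.proj_apply, Pi.single_apply,
          if_neg (by intro he; rw [Fin.ext_iff] at he; simp at he hjk; omega)]
    · rw [canon_side _ _ (by omega) (by omega)]
      rw [LinearMap.proj_apply, Pi.single_apply,
        if_neg (by intro he; rw [Fin.ext_iff] at he; simp at he; omega)]
  have h2 : v ⟨n - 1, by omega⟩ = 1 := by
    rcases zmod2_cases (v ⟨n - 1, by omega⟩) with h0 | h0
    swap; · exact h0
    exfalso
    obtain ⟨-, -, sp⟩ := h ⟨0, by omega⟩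
    refine span_contra sp (LinearMap.proj ⟨n - 1, by omega⟩) ?_
      (x := Pi.single ⟨n - 1, by omega⟩ 1) (by simp)
    intro j hj
    simp only [Set.mem_setOf_eq] at hj
    rcases hj with ⟨hjn, hjk⟩ | hjn
    · rw [canon_side _ _ (by omega) (by omega)]
      rw [LinearMap.proj_apply, Pi.single_apply,
        if_neg (by intro he; rw [Fin.ext_iff] at he; simp at he hjk; omega)]
    · rw [canon_topv _ _ hjn]; exact h0
  refine ⟨h1, h2, ?_⟩
  by_cases hA : a ⟨n - 1, by omega⟩ = 0
  · exact Or.inl hA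
  have hA1 : a ⟨n - 1, by omega⟩ = 1 := (zmod2_cases _).resolve_left hA
  refine Or.inr fun i hi => ?_
  rcases zmod2_cases (v i) with h0 | h0
  · exact h0
  exfalso
  obtain ⟨-, -, sp⟩ := h ⟨(i : ℕ) + 1, by omega⟩
  refine span_contra sp (LinearMap.proj i + LinearMap.proj ⟨n - 1, by omega⟩) ?_
    (x := Pi.single i 1) ?_
  · intro j hj
    simp only [Set.mem_setOf_eq] at hj
    rcases hj with ⟨hjn, hjk⟩ | hjn
    · by_cases hj0 : (j : ℕ) = 0
      · rw [canon_zero _ _ hj0]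
        rw [LinearMap.add_apply, LinearMap.proj_apply, LinearMap.proj_apply,
          h1 i hi, hA1]
        decide
      · rw [canon_side _ _ (by omega) (by omega)]
        rw [LinearMap.add_apply, LinearMap.proj_apply, LinearMap.proj_apply,
          Pi.single_apply, Pi.single_apply,
          if_neg (by intro he; rw [Fin.ext_iff] at he; simp at he hjk; omega),
          if_neg (by intro he; rw [Fin.ext_iff] at he; simp at he; omega)]
        decide
    · rw [canon_topv _ _ hjn]
      rw [LinearMap.add_apply, LinearMap.proj_apply, LinearMap.proj_apply, h0, h2]
      decide
  · rw [LinearMap.add_apply, LinearMap.proj_apply, LinearMap.proj_apply,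
      Pi.single_eq_same, Pi.single_apply,
      if_neg (by intro he; rw [Fin.ext_iff] at he; simp at he; omega)]
    decide


lemma canon_sum (hn : 3 ≤ n) (a v : Fin n → ZMod 2) :
    ∑ j ∈ Finset.univ.filter (fun j : Fin (n + 2) => 1 ≤ (j : ℕ) ∧ (j : ℕ) ≤ n - 1),
        canon n a v j
      = fun i : Fin n => if (i : ℕ) < n - 1 then 1 else 0 := by
  funext x
  rw [Finset.sum_apply]
  have hx2 : (x : ℕ) < n := x.2
  have hcongr : ∀ j ∈ Finset.univ.filter
      (fun j : Fin (n + 2) => 1 ≤ (j : ℕ) ∧ (j : ℕ) ≤ n - 1),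
      canon n a v j x = if j = (⟨(x : ℕ) + 1, by omega⟩ : Fin (n + 2)) then 1 else 0 := by
    intro j hj
    simp only [Finset.mem_filter] at hj
    rw [canon_side _ _ hj.2.1 (by omega), Pi.single_apply]
    by_cases hc : (j : ℕ) = (x : ℕ) + 1
    · rw [if_pos (Fin.ext (by simp; omega)), if_pos (Fin.ext (by simp; omega))]
    · rw [if_neg (fun he => hc (by rw [Fin.ext_iff] at he; simp at he; omega)),
        if_neg (fun he => hc (by rw [Fin.ext_iff] at he; simp at he; omega))]
  rw [Finset.sum_congr rfl hcongr, Finset.sum_ite_eq']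
  by_cases hx : (x : ℕ) < n - 1
  · rw [if_pos (by simp; omega), if_pos hx]
  · rw [if_neg (by simp; omega), if_neg hx]

lemma dj_equivalence {p : (Fin (n + 2) → (Fin n → ZMod 2)) → Prop} :
    Equivalence (fun l1 l2 : {l // p l} => djEquiv n l1.1 l2.1) := by
  constructor
  · exact fun l => ⟨LinearEquiv.refl _ _, by simp⟩
  · rintro l1 l2 ⟨θ, hθ⟩
    exact ⟨θ.symm, by rw [hθ]; funext j; simp⟩
  · rintro l1 l2 l3 ⟨θ, hθ⟩ ⟨σ, hσ⟩
    exact ⟨θ.trans σ, by rw [hσ, hθ]; funext j; simp⟩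

lemma canon_eq_of_dj (hn : 3 ≤ n) {a v a' v' : Fin n → ZMod 2}
    (h : djEquiv n (canon n a v) (canon n a' v')) : a = a' ∧ v = v' := by
  obtain ⟨θ, hθ⟩ := h
  have hfix : ∀ i : Fin n, θ (Pi.single i 1) = Pi.single i 1 := by
    intro i
    have hi2 : (i : ℕ) < n := i.2
    have hj := congrFun hθ ⟨(i : ℕ) + 1, by omega⟩
    rw [canon_side _ _ (by simp) (by simp),
      canon_side _ _ (by simp) (by simp)] at hj
    have he : (⟨((⟨(i : ℕ) + 1, by omega⟩ : Fin (n + 2)) : ℕ) - 1, by simp⟩ : Fin n)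
        = i := Fin.ext (by simp)
    rw [he] at hj
    exact hj.symm
  have hid := theta_eq_id θ hfix
  have h0 := congrFun hθ 0
  rw [canon_zero _ _ (by simp), canon_zero _ _ (by simp), hid] at h0
  have ht := congrFun hθ ⟨n + 1, by omega⟩
  rw [canon_topv _ _ (by simp), canon_topv _ _ (by simp), hid] at ht
  exact ⟨h0.symm, ht.symm⟩

/-- first-method `b₀`. -/
def aOne (n : ℕ) : Fin n → ZMod 2 := fun i => if (i : ℕ) < n - 1 then 1 else 0

/-- second-method `b₀`. -/
def allOne (n : ℕ) : Fin n → ZMod 2 := fun _ => 1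

/-- extension of a parameter to `b_{n+1}`. -/
def extv (n : ℕ) (w : Fin (n - 1) → ZMod 2) : Fin n → ZMod 2 :=
  fun i => if h : (i : ℕ) < n - 1 then w ⟨i, h⟩ else 1

/-- `e_{n-1}`. -/
def eL (n : ℕ) : Fin n → ZMod 2 := fun i => if (i : ℕ) = n - 1 then 1 else 0

lemma charFn_canon_first (hn : 3 ≤ n) (w : Fin (n - 1) → ZMod 2) :
    prismCharFn n (canon n (aOne n) (extv n w)) := by
  refine canon_charFn hn (fun i hi => by simp [aOne, hi]) ?_ (Or.inl ?_)
  · simp [extv]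
  · simp [aOne]

lemma charFn_canon_second (hn : 3 ≤ n) :
    prismCharFn n (canon n (allOne n) (eL n)) := by
  refine canon_charFn hn (fun i hi => rfl) ?_ (Or.inr fun i hi => ?_)
  · simp [eL]
  · simp [eL]; omega

lemma sum_canon_first (hn : 3 ≤ n) (v : Fin n → ZMod 2) :
    canon n (aOne n) v 0 = ∑ j ∈ Finset.univ.filter
      (fun j : Fin (n + 2) => 1 ≤ (j : ℕ) ∧ (j : ℕ) ≤ n - 1), canon n (aOne n) v j := by
  rw [canon_zero _ _ (by simp), canon_sum hn]
  rfl


lemma extv_lt (w : Fin (n - 1) → ZMod 2) {i : Fin n} (h : (i : ℕ) < n - 1) :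
    extv n w i = w ⟨i, h⟩ := dif_pos h

lemma count1 (hn : 3 ≤ n) :
    Nat.card (Quot (fun l1 l2 : {l : Fin (n + 2) → (Fin n → ZMod 2) //
        prismCharFn n l ∧
          l 0 = ∑ j ∈ Finset.univ.filter
            (fun j : Fin (n + 2) => 1 ≤ (j : ℕ) ∧ (j : ℕ) ≤ n - 1), l j} =>
      djEquiv n l1.1 l2.1)) = 2 ^ (n - 1) := by
  let f : (Fin (n - 1) → ZMod 2) → Quot (fun l1 l2 : {l : Fin (n + 2) → (Fin n → ZMod 2) //
        prismCharFn n l ∧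
          l 0 = ∑ j ∈ Finset.univ.filter
            (fun j : Fin (n + 2) => 1 ≤ (j : ℕ) ∧ (j : ℕ) ≤ n - 1), l j} =>
      djEquiv n l1.1 l2.1) := fun w =>
    Quot.mk _ ⟨canon n (aOne n) (extv n w), charFn_canon_first hn w,
      sum_canon_first hn (extv n w)⟩
  have hinj : Function.Injective f := by
    intro w w' he
    have hdj := (dj_equivalence.eqvGen_iff).mp (Quot.eq.mp he)
    obtain ⟨-, hv⟩ := canon_eq_of_dj hn hdj
    funext i
    have h2 := congrFun hv ⟨(i : ℕ), by have := i.2; omega⟩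
    simpa [extv, i.isLt] using h2
  have hsurj : Function.Surjective f := by
    intro q
    refine Quot.inductionOn q ?_
    rintro ⟨l, hl, hs⟩
    obtain ⟨θ, hθ⟩ := normalize hn hl
    obtain ⟨p1, p2, p3⟩ := P_of_charFn hn (hθ ▸ charFn_map θ hl)
    have ha : θ (l 0) = aOne n := by
      rw [show l 0 = _ from hs, map_sum]
      rw [Finset.sum_congr rfl (fun j _ => congrFun hθ j), canon_sum hn]
      rfl
    set w : Fin (n - 1) → ZMod 2 :=
      fun i => θ (l ⟨n + 1, by omega⟩) ⟨(i : ℕ), by have := i.2; omega⟩ with hw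
    have hv : θ (l ⟨n + 1, by omega⟩) = extv n w := by
      funext i
      by_cases hi : (i : ℕ) < n - 1
      · rw [extv_lt _ hi]
      · have he : i = ⟨n - 1, by omega⟩ := Fin.ext (by have := i.2; simp; omega)
        simp only [extv]
        rw [dif_neg hi, he]
        exact p2
    refine ⟨w, ?_⟩
    have hdj2 : djEquiv n (canon n (aOne n) (extv n w)) l :=
      ⟨θ.symm, by rw [← ha, ← hv, ← hθ]; funext j; simp⟩
    exact Quot.sound hdj2
  rw [← Nat.card_eq_of_bijective f ⟨hinj, hsurj⟩]
  simp [Nat.card_eq_fintype_card, Fintype.card_fun]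

lemma count2 (hn : 3 ≤ n) :
    Nat.card (Quot (fun l1 l2 : {l : Fin (n + 2) → (Fin n → ZMod 2) //
        prismCharFn n l} => djEquiv n l1.1 l2.1)) = 1 + 2 ^ (n - 1) := by
  let f : Option (Fin (n - 1) → ZMod 2) →
      Quot (fun l1 l2 : {l : Fin (n + 2) → (Fin n → ZMod 2) //
        prismCharFn n l} => djEquiv n l1.1 l2.1) := fun o =>
    match o with
    | some w => Quot.mk _ ⟨canon n (aOne n) (extv n w), charFn_canon_first hn w⟩
    | none => Quot.mk _ ⟨canon n (allOne n) (eL n), charFn_canon_second hn⟩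
  have hinj : Function.Injective f := by
    intro o o' he
    match o, o' with
    | some w, some w' =>
      have hdj := (dj_equivalence.eqvGen_iff).mp (Quot.eq.mp he)
      obtain ⟨-, hv⟩ := canon_eq_of_dj hn hdj
      congr 1
      funext i
      have h2 := congrFun hv ⟨(i : ℕ), by have := i.2; omega⟩
      simpa [extv, i.isLt] using h2
    | some w, none =>
      have hdj := (dj_equivalence.eqvGen_iff).mp (Quot.eq.mp he)
      obtain ⟨hA, -⟩ := canon_eq_of_dj hn hdj
      exact absurd (congrFun hA ⟨n - 1, by omega⟩) (by simp [aOne, allOne])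
    | none, some w' =>
      have hdj := (dj_equivalence.eqvGen_iff).mp (Quot.eq.mp he)
      obtain ⟨hA, -⟩ := canon_eq_of_dj hn hdj
      exact absurd (congrFun hA ⟨n - 1, by omega⟩) (by simp [aOne, allOne])
    | none, none => rfl
  have hsurj : Function.Surjective f := by
    intro q
    refine Quot.inductionOn q ?_
    rintro ⟨l, hl⟩
    obtain ⟨θ, hθ⟩ := normalize hn hl
    obtain ⟨p1, p2, p3⟩ := P_of_charFn hn (hθ ▸ charFn_map θ hl)
    by_cases hA : θ (l 0) ⟨n - 1, by omega⟩ = 0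
    · have ha : θ (l 0) = aOne n := by
        funext i
        by_cases hi : (i : ℕ) < n - 1
        · rw [p1 i hi, aOne, if_pos hi]
        · have he : i = ⟨n - 1, by omega⟩ := Fin.ext (by have := i.2; simp; omega)
          rw [he, hA, aOne]
          simp
      set w : Fin (n - 1) → ZMod 2 :=
        fun i => θ (l ⟨n + 1, by omega⟩) ⟨(i : ℕ), by have := i.2; omega⟩ with hw
      have hv : θ (l ⟨n + 1, by omega⟩) = extv n w := by
        funext i
        by_cases hi : (i : ℕ) < n - 1
        · rw [extv_lt _ hi]
        · have he : i = ⟨n - 1, by omega⟩ := Fin.ext (by have := i.2; simp; omega)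
          simp only [extv]
          rw [dif_neg hi, he]
          exact p2
      refine ⟨some w, ?_⟩
      have hdj2 : djEquiv n (canon n (aOne n) (extv n w)) l :=
        ⟨θ.symm, by rw [← ha, ← hv, ← hθ]; funext j; simp⟩
      exact Quot.sound hdj2
    · have hA1 : θ (l 0) ⟨n - 1, by omega⟩ = 1 := (zmod2_cases _).resolve_left hA
      have hV := p3.resolve_left hA
      have ha : θ (l 0) = allOne n := by
        funext i
        by_cases hi : (i : ℕ) < n - 1
        · rw [p1 i hi]; rfl
        · have he : i = ⟨n - 1, by omega⟩ := Fin.ext (by have := i.2; simp; omega)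
          rw [he, hA1]; rfl
      have hv : θ (l ⟨n + 1, by omega⟩) = eL n := by
        funext i
        by_cases hi : (i : ℕ) < n - 1
        · rw [hV i hi, eL]
          rw [if_neg (by omega)]
        · have he : i = ⟨n - 1, by omega⟩ := Fin.ext (by have := i.2; simp; omega)
          rw [he, p2, eL]
          simp
      refine ⟨none, ?_⟩
      have hdj2 : djEquiv n (canon n (allOne n) (eL n)) l :=
        ⟨θ.symm, by rw [← ha, ← hv, ← hθ]; funext j; simp⟩
      exact Quot.sound hdj2
  rw [← Nat.card_eq_of_bijective f ⟨hinj, hsurj⟩, Finite.card_option]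
  simp [Nat.card_eq_fintype_card, Fintype.card_fun]
  omega

end Span

end Stmt5Aux

/-- For `n ≥ 3`, the first-method characteristic functions
(`b₀ = b₁ + ⋯ + b_{n-1}`) form exactly `2^{n-1}` D-J classes, and in total there are
exactly `1 + 2^{n-1}` D-J equivalence classes of `ℤ/2`-characteristic functions on the
prism `Δ^{n-1} × I`. -/
theorem stmt_5 (n : ℕ) (hn : 3 ≤ n) :
    Nat.card (Quot (fun l1 l2 : {l : Fin (n + 2) → (Fin n → ZMod 2) //
        prismCharFn n l ∧
          l 0 = ∑ j ∈ Finset.univ.filter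
            (fun j : Fin (n + 2) => 1 ≤ (j : ℕ) ∧ (j : ℕ) ≤ n - 1), l j} =>
      djEquiv n l1.1 l2.1)) = 2 ^ (n - 1) ∧
    Nat.card (Quot (fun l1 l2 : {l : Fin (n + 2) → (Fin n → ZMod 2) //
        prismCharFn n l} => djEquiv n l1.1 l2.1)) = 1 + 2 ^ (n - 1) :=
  ⟨Stmt5Aux.count1 hn, Stmt5Aux.count2 hn⟩
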